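/- Let U, A₁, V ∈ SL₂(ℂ). The trace of the endomorphism of sl₂(ℂ) given by ξ ↦ (U ξ A₁ V)₀ equals ½·tr(U A₁ V) + tr(U V⁻¹ A₁⁻¹). -/

import Mathlib

/-- `sl₂(ℂ)`: the space of traceless `2×2` complex matrices, as a submodule of `M₂(ℂ)`. -/
noncomputable def sl2 : Submodule ℂ (Matrix (Fin 2) (Fin 2) ℂ) where
  carrier := {X | X.trace = 0}
  add_mem' := by
    intro a b ha hb
    simp only [Set.mem_setOf_eq] at *
    simp [Matrix.trace_add, ha, hb]
  zero_mem' := by simp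
  smul_mem' := by
    intro c a ha
    simp only [Set.mem_setOf_eq] at *
    simp [Matrix.trace_smul, ha]

/-- For `U, A₁, V ∈ SL₂(ℂ)`, the endomorphism of `sl₂(ℂ)` given by `ξ ↦ (U ξ A₁ V)₀`,
where `M₀ = M − (tr(M)/2)·I` is the traceless part. -/
noncomputable def occEndo (U A₁ V : Matrix.SpecialLinearGroup (Fin 2) ℂ) : sl2 →ₗ[ℂ] sl2 where
  toFun ξ := ⟨(U : Matrix (Fin 2) (Fin 2) ℂ) * ξ.1 * (A₁ : Matrix (Fin 2) (Fin 2) ℂ) *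
      (V : Matrix (Fin 2) (Fin 2) ℂ) -
      (((U : Matrix (Fin 2) (Fin 2) ℂ) * ξ.1 * (A₁ : Matrix (Fin 2) (Fin 2) ℂ) *
        (V : Matrix (Fin 2) (Fin 2) ℂ)).trace / 2) • (1 : Matrix (Fin 2) (Fin 2) ℂ), by
    show Matrix.trace _ = 0
    simp [Matrix.trace_sub, Matrix.trace_smul, Matrix.trace_one]⟩
  map_add' := by
    intro a b
    apply Subtype.ext
    simp [Matrix.mul_add, Matrix.add_mul, Matrix.trace_add, add_div, add_smul]
    abel
  map_smul' := by
    intro c a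
    apply Subtype.ext
    simp [Matrix.mul_smul, Matrix.smul_mul, Matrix.trace_smul, smul_smul, mul_div_assoc,
      smul_sub]

set_option linter.unnecessarySeqFocus false

/-- Coordinates on `sl₂(ℂ)`: a traceless matrix is determined by its `(0,0)`, `(0,1)`,
`(1,0)` entries. -/
noncomputable def sl2Equiv : sl2 ≃ₗ[ℂ] (Fin 3 → ℂ) where
  toFun ξ := ![ξ.1 0 0, ξ.1 0 1, ξ.1 1 0]
  map_add' a b := by funext i; fin_cases i <;> simp
  map_smul' c a := by funext i; fin_cases i <;> simp
  invFun c := ⟨!![c 0, c 1; c 2, -(c 0)], by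
    show Matrix.trace _ = 0
    simp [Matrix.trace_fin_two]⟩
  left_inv ξ := by
    apply Subtype.ext
    have h : (ξ.1).trace = 0 := ξ.2
    rw [Matrix.trace_fin_two] at h
    ext i j
    fin_cases i <;> fin_cases j <;> simp <;> linear_combination -h
  right_inv c := by funext i; fin_cases i <;> simp

/-- The standard basis of `sl₂(ℂ)`. -/
noncomputable def sl2Basis : Module.Basis (Fin 3) ℂ sl2 := Module.Basis.ofEquivFun sl2Equiv

/-- For `U, A₁, V ∈ SL₂(ℂ)`, the trace of the endomorphism `ξ ↦ (U ξ A₁ V)₀` of `sl₂(ℂ)`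
equals `½·tr(U A₁ V) + tr(U V⁻¹ A₁⁻¹)`. -/
theorem trace_occEndo (U A₁ V : Matrix.SpecialLinearGroup (Fin 2) ℂ) :
    LinearMap.trace ℂ sl2 (occEndo U A₁ V) =
      (1 / 2) * ((U : Matrix (Fin 2) (Fin 2) ℂ) * (A₁ : Matrix (Fin 2) (Fin 2) ℂ) *
        (V : Matrix (Fin 2) (Fin 2) ℂ)).trace +
      ((U : Matrix (Fin 2) (Fin 2) ℂ) * ((V⁻¹ : Matrix.SpecialLinearGroup (Fin 2) ℂ) :
        Matrix (Fin 2) (Fin 2) ℂ) * ((A₁⁻¹ : Matrix.SpecialLinearGroup (Fin 2) ℂ) :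
        Matrix (Fin 2) (Fin 2) ℂ)).trace := by
  rw [LinearMap.trace_eq_matrix_trace ℂ sl2Basis]
  rw [Matrix.trace, Matrix.SpecialLinearGroup.coe_inv, Matrix.SpecialLinearGroup.coe_inv,
    Matrix.adjugate_fin_two, Matrix.adjugate_fin_two]
  simp only [LinearMap.toMatrix_apply, sl2Basis, Module.Basis.ofEquivFun_repr_apply,
    Module.Basis.coe_ofEquivFun, sl2Equiv, occEndo, LinearEquiv.coe_mk, LinearMap.coe_mk,
    AddHom.coe_mk, Fin.sum_univ_three, Matrix.diag_apply]
  simp [Matrix.mul_apply, Fin.sum_univ_two, Matrix.trace_fin_two, Matrix.one_apply,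
    Matrix.sub_apply, Matrix.smul_apply, Pi.single_apply]
  ring
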